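/- For every quantifier-free formula φ(x; y_1,...,y_n) in the language {<} (partitioned with single object variable x), the family C^o_φ = {φ(ℚ; a_1,...,a_n) : a_1 < ... < a_n in ℚ} is finitely characterized by some forbidden label η ∈ 2^{d+1} for some d ∈ ω. -/

import Mathlib

open Set

def traceOn {X : Type*} (C : Set (Set X)) (A : Set X) : Set (Set X) :=
  {s | ∃ c ∈ C, s = c ∩ A}

def Shatters {X : Type*} (C : Set (Set X)) (A : Set X) : Prop :=
  ∀ s ⊆ A, ∃ c ∈ C, c ∩ A = s

def VCDimEq {X : Type*} (C : Set (Set X)) (d : ℕ) : Prop :=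
  (∃ A : Set X, A.Finite ∧ A.ncard = d ∧ Shatters C A) ∧
    ∀ A : Set X, A.Finite → Shatters C A → A.ncard ≤ d

def Phi (d n : ℕ) : ℕ := if d ≤ n then ∑ i ∈ Finset.range (d + 1), n.choose i else 2 ^ n

def Induces {X : Type*} [LinearOrder X] {d : ℕ} (c : Set X) (η : Fin (d + 1) → Bool)
    (B : Set X) : Prop :=
  ∃ b : Fin (d + 1) → X, StrictMono b ∧ (∀ i, b i ∈ B) ∧ ∀ i, b i ∈ c ↔ η i = true

/-- Terms of the language {<} with one object variable `x` and `n` parameter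
variables `y i`. -/
inductive Trm (n : ℕ) : Type
  | x : Trm n
  | y : Fin n → Trm n

/-- Quantifier-free formulas of the language {<} (with equality), partitioned
with single object variable `x` and parameter variables `y 1, ..., y n`. -/
inductive QF (n : ℕ) : Type
  | lt : Trm n → Trm n → QF n
  | eq : Trm n → Trm n → QF n
  | not : QF n → QF n
  | and : QF n → QF n → QF n
  | or : QF n → QF n → QF n

def Trm.eval {n : ℕ} (a : ℚ) (p : Fin n → ℚ) : Trm n → ℚ
  | .x => a
  | .y i => p i

/-- Satisfaction in (ℚ, <) with object value `a` and parameters `p`. -/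
def QF.Sat {n : ℕ} (a : ℚ) (p : Fin n → ℚ) : QF n → Prop
  | .lt t₁ t₂ => t₁.eval a p < t₂.eval a p
  | .eq t₁ t₂ => t₁.eval a p = t₂.eval a p
  | .not φ => ¬ φ.Sat a p
  | .and φ ψ => φ.Sat a p ∧ ψ.Sat a p
  | .or φ ψ => φ.Sat a p ∨ ψ.Sat a p

/-- The family of subsets of ℚ defined by φ with strictly increasing
parameters. -/
def defFam {n : ℕ} (φ : QF n) : Set (Set ℚ) :=
  {s | ∃ p : Fin n → ℚ, StrictMono p ∧ s = {a : ℚ | φ.Sat a p}}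



def posN {n : ℕ} (a : ℚ) (p : Fin n → ℚ) : ℕ :=
  2 * (Finset.univ.filter (fun i => p i < a)).card + (if ∃ i, p i = a then 1 else 0)

variable {n : ℕ} {p : Fin n → ℚ} {a a' : ℚ}

theorem card_filter_lt_fin (k : ℕ) (hk : k ≤ n) :
    (Finset.univ.filter (fun i : Fin n => (i : ℕ) < k)).card = k := by
  rcases Nat.lt_or_ge k n with h | h
  · have : (Finset.univ.filter (fun i : Fin n => (i : ℕ) < k)) = Finset.Iio ⟨k, h⟩ := by
      ext i; simp [Fin.lt_def]
    rw [this, Fin.card_Iio]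
  · have hkn : k = n := le_antisymm hk h
    have : (Finset.univ.filter (fun i : Fin n => (i : ℕ) < k)) = Finset.univ := by
      ext i; simp [hkn, i.isLt]
    rw [this, Finset.card_univ, Fintype.card_fin, hkn]

theorem card_eq_of_anchor (hp : StrictMono p) (k : Fin n) (h : p k = a) :
    (Finset.univ.filter (fun i => p i < a)).card = k := by
  have : (Finset.univ.filter (fun i => p i < a)) =
      (Finset.univ.filter (fun i : Fin n => (i : ℕ) < k)) := by
    ext i; simp only [Finset.mem_filter, Finset.mem_univ, true_and]
    rw [← h, hp.lt_iff_lt, Fin.lt_def]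
  rw [this, card_filter_lt_fin _ k.isLt.le]

theorem H1 (hp : StrictMono p) (i : Fin n) :
    p i < a ↔ (i : ℕ) < (Finset.univ.filter (fun j => p j < a)).card := by
  constructor
  · intro h
    have hsub : Finset.Iic i ⊆ Finset.univ.filter (fun j => p j < a) := by
      intro j hj
      simp only [Finset.mem_Iic] at hj
      simp only [Finset.mem_filter, Finset.mem_univ, true_and]
      exact lt_of_le_of_lt (hp.monotone hj) h
    have := Finset.card_le_card hsub
    rw [Fin.card_Iic] at this
    omega
  · intro h
    by_contra hc
    push_neg at hc
    have hsub : Finset.univ.filter (fun j => p j < a) ⊆ Finset.Iio i := by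
      intro j hj
      simp only [Finset.mem_filter, Finset.mem_univ, true_and] at hj
      simp only [Finset.mem_Iio]
      by_contra hji
      push_neg at hji
      exact absurd (lt_of_lt_of_le hj (le_trans hc (hp.monotone hji))) (lt_irrefl _)
    have := Finset.card_le_card hsub
    rw [Fin.card_Iio] at this
    omega

theorem L1 (hp : StrictMono p) (i : Fin n) : a < p i ↔ posN a p < 2 * (i : ℕ) + 1 := by
  unfold posN
  split_ifs with hf
  · obtain ⟨k, hk⟩ := hf
    rw [card_eq_of_anchor hp k hk]
    constructor
    · intro h
      have : (k : ℕ) < i := by rw [← Fin.lt_def, ← hp.lt_iff_lt, hk]; exact h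
      omega
    · intro h
      rw [← hk, hp.lt_iff_lt, Fin.lt_def]; omega
  · push_neg at hf
    constructor
    · intro h
      have : ¬ ((i:ℕ) < (Finset.univ.filter (fun j => p j < a)).card) := by
        rw [← H1 hp]; exact fun hc => absurd (lt_trans hc h) (lt_irrefl _)
      omega
    · intro h
      have : ¬ p i < a := by rw [H1 hp]; omega
      exact lt_of_le_of_ne (not_lt.mp this) (fun he => hf i he.symm)

theorem L2 (hp : StrictMono p) (i : Fin n) : a = p i ↔ posN a p = 2 * (i : ℕ) + 1 := by
  unfold posN
  split_ifs with hf
  · obtain ⟨k, hk⟩ := hf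
    rw [card_eq_of_anchor hp k hk]
    constructor
    · intro h
      have : k = i := hp.injective (by rw [hk, ← h])
      subst this; omega
    · intro h
      have : (k:ℕ) = (i:ℕ) := by omega
      rw [← hk, Fin.eq_of_val_eq this]
  · constructor
    · intro h; exact absurd ⟨i, h.symm⟩ hf
    · intro h; omega

theorem posN_le (hp : StrictMono p) : posN a p ≤ 2 * n := by
  unfold posN
  split_ifs with hf
  · obtain ⟨k, hk⟩ := hf
    rw [card_eq_of_anchor hp k hk]
    have := k.isLt; omega
  · have : (Finset.univ.filter (fun i => p i < a)).card ≤ n := by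
      have := Finset.card_le_card (Finset.filter_subset (fun i => p i < a) Finset.univ)
      simpa using this
    omega

theorem posN_mono (hp : StrictMono p) (h : a ≤ a') : posN a p ≤ posN a' p := by
  rcases eq_or_lt_of_le h with rfl | h
  · exact le_rfl
  unfold posN
  have hsub : Finset.univ.filter (fun i => p i < a) ⊆ Finset.univ.filter (fun i => p i < a') := by
    intro j hj
    simp only [Finset.mem_filter, Finset.mem_univ, true_and] at hj ⊢
    exact lt_trans hj h
  split_ifs with h1 h2 h2
  · obtain ⟨k, hk⟩ := h1
    have hss : Finset.univ.filter (fun i => p i < a) ⊂ Finset.univ.filter (fun i => p i < a') := by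
      refine ⟨hsub, fun hc => ?_⟩
      have : k ∈ Finset.univ.filter (fun i => p i < a') := by
        simp only [Finset.mem_filter, Finset.mem_univ, true_and]; rw [hk]; exact h
      have := hc this
      simp only [Finset.mem_filter, Finset.mem_univ, true_and] at this
      rw [hk] at this; exact absurd this (lt_irrefl _)
    have := Finset.card_lt_card hss
    omega
  · obtain ⟨k, hk⟩ := h1
    have hss : Finset.univ.filter (fun i => p i < a) ⊂ Finset.univ.filter (fun i => p i < a') := by
      refine ⟨hsub, fun hc => ?_⟩
      have : k ∈ Finset.univ.filter (fun i => p i < a') := by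
        simp only [Finset.mem_filter, Finset.mem_univ, true_and]; rw [hk]; exact h
      have := hc this
      simp only [Finset.mem_filter, Finset.mem_univ, true_and] at this
      rw [hk] at this; exact absurd this (lt_irrefl _)
    have := Finset.card_lt_card hss
    omega
  · have := Finset.card_le_card hsub; omega
  · have := Finset.card_le_card hsub; omega

theorem posN_odd_inj (hp : StrictMono p) (hodd : posN a p % 2 = 1)
    (heq : posN a p = posN a' p) : a = a' := by
  have h1 : ∃ i, p i = a := by
    by_contra hc
    unfold posN at hodd; rw [if_neg hc] at hodd; omega
  have h2 : ∃ i, p i = a' := by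
    by_contra hc
    unfold posN at hodd heq
    rw [if_neg hc] at heq; rw [if_pos h1] at hodd heq
    omega
  obtain ⟨k, hk⟩ := h1
  obtain ⟨k', hk'⟩ := h2
  unfold posN at heq
  rw [if_pos ⟨k, hk⟩, if_pos ⟨k', hk'⟩, card_eq_of_anchor hp k hk,
    card_eq_of_anchor hp k' hk'] at heq
  have : k = k' := Fin.eq_of_val_eq (by omega)
  rw [← hk, ← hk', this]

def tCode {n : ℕ} (k : ℕ) : Trm n → ℕ
  | .x => k
  | .y i => 2 * (i : ℕ) + 1

def sVal {n : ℕ} (φ : QF n) (k : ℕ) : Bool :=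
  match φ with
  | .lt t₁ t₂ => decide (tCode k t₁ < tCode k t₂)
  | .eq t₁ t₂ => decide (tCode k t₁ = tCode k t₂)
  | .not ψ => ! sVal ψ k
  | .and ψ χ => sVal ψ k && sVal χ k
  | .or ψ χ => sVal ψ k || sVal χ k

theorem term_lt {n : ℕ} {p : Fin n → ℚ} (hp : StrictMono p) (a : ℚ) (t₁ t₂ : Trm n) :
    t₁.eval a p < t₂.eval a p ↔ tCode (posN a p) t₁ < tCode (posN a p) t₂ := by
  cases t₁ <;> cases t₂ <;> simp only [Trm.eval, tCode]
  · exact ⟨fun h => absurd h (lt_irrefl _), fun h => absurd h (lt_irrefl _)⟩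
  · exact L1 hp _
  · rename_i i
    have l1 := L1 (a := a) hp i
    have l2 := L2 (a := a) hp i
    constructor
    · intro h
      rcases lt_trichotomy (posN a p) (2 * (i:ℕ) + 1) with hc | hc | hc
      · exact absurd (l1.mpr hc) (by exact fun hc' => absurd (lt_trans h hc') (lt_irrefl _))
      · exact absurd (l2.mpr hc).symm (ne_of_lt h)
      · omega
    · intro h
      rcases lt_trichotomy (p i) a with hc | hc | hc
      · exact hc
      · exact absurd (l2.mp hc.symm) (by omega)
      · exact absurd (l1.mp hc) (by omega)
  · rename_i i j
    rw [hp.lt_iff_lt, Fin.lt_def]; omega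

theorem term_eq {n : ℕ} {p : Fin n → ℚ} (hp : StrictMono p) (a : ℚ) (t₁ t₂ : Trm n) :
    t₁.eval a p = t₂.eval a p ↔ tCode (posN a p) t₁ = tCode (posN a p) t₂ := by
  cases t₁ <;> cases t₂ <;> simp only [Trm.eval, tCode]
  · exact L2 hp _
  · rename_i i
    constructor
    · intro h; exact ((L2 hp i).mp h.symm).symm
    · intro h; exact ((L2 hp i).mpr h.symm).symm
  · rename_i i j
    rw [hp.injective.eq_iff, Fin.ext_iff]; omega

theorem sat_iff_sVal {n : ℕ} {p : Fin n → ℚ} (hp : StrictMono p) (a : ℚ) (φ : QF n) :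
    φ.Sat a p ↔ sVal φ (posN a p) = true := by
  induction φ with
  | lt t₁ t₂ => simp [QF.Sat, sVal, term_lt hp a t₁ t₂]
  | eq t₁ t₂ => simp [QF.Sat, sVal, term_eq hp a t₁ t₂]
  | not ψ ih => simp [QF.Sat, sVal, ih]
  | and ψ χ ih₁ ih₂ => simp [QF.Sat, sVal, ih₁, ih₂]
  | or ψ χ ih₁ ih₂ => simp [QF.Sat, sVal, ih₁, ih₂]

/-- `Emb l w` : the word `w` embeds into the pattern `l = [e₀, o₁, e₂, ...]`
where even-indexed letters denote infinite blocks and odd-indexed single letters. -/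
inductive Emb : List Bool → List Bool → Prop
  | nil (l : List Bool) : Emb l []
  | single {e : Bool} {w : List Bool} : Emb [e] w → Emb [e] (e :: w)
  | head {e o : Bool} {r w : List Bool} : Emb (e :: o :: r) w → Emb (e :: o :: r) (e :: w)
  | point {e o : Bool} {r w : List Bool} : Emb r w → Emb (e :: o :: r) (o :: w)
  | skip {e o : Bool} {r w : List Bool} : Emb r w → Emb (e :: o :: r) w

theorem Emb.dropHead : ∀ {l v : List Bool}, Emb l v → ∀ {a w}, v = a :: w → Emb l w := by
  intro l v h
  induction h with
  | nil => intro a w hw; cases hw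
  | single h ih => intro a w hw; cases hw; exact h
  | head h ih => intro a w hw; cases hw; exact h
  | point h ih => intro a w hw; cases hw; exact .skip h
  | skip h ih => intro a w hw; exact .skip (ih hw)

def eta : List Bool → List Bool
  | [] => [true]
  | [e] => [!e]
  | [e, _] => [!e]
  | e :: o :: e2 :: r =>
    if o = e ∧ e2 = e then eta (e :: r) else (!e) :: eta (e2 :: r)
termination_by l => l.length

theorem eta_ne_nil : ∀ l, eta l ≠ [] := by
  have key : ∀ m, ∀ l : List Bool, l.length = m → eta l ≠ [] := by
    intro m
    induction m using Nat.strong_induction_on with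
    | _ m ih =>
    intro l hn
    match l with
    | [] => simp [eta]
    | [e] => simp [eta]
    | [e, o] => simp [eta]
    | e :: o :: e2 :: r =>
      rw [eta]
      split
      · exact ih (e :: r).length (by simp only [List.length_cons] at hn ⊢; omega) _ rfl
      · simp
  exact fun l => key l.length l rfl

theorem eta_head : ∀ (l : List Bool) (e : Bool), ∃ t, eta (e :: l) = (!e) :: t := by
  have key : ∀ m, ∀ l : List Bool, l.length = m → ∀ e : Bool, ∃ t, eta (e :: l) = (!e) :: t := by
    intro m
    induction m using Nat.strong_induction_on with
    | _ m ih =>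
    intro l hn e
    match l with
    | [] => exact ⟨[], by rw [eta]⟩
    | [o] => exact ⟨[], by rw [eta]⟩
    | o :: e2 :: r =>
      rw [eta]
      split
      · rename_i hc
        obtain ⟨t, ht⟩ := ih r.length (by simp only [List.length_cons] at hn ⊢; omega) r rfl e
        exact ⟨t, ht⟩
      · exact ⟨eta (e2 :: r), rfl⟩
  exact fun l e => key l.length l rfl e

open List

theorem mism {x a : Bool} {t u : List Bool} (h : x ≠ a) : (x :: t) <+ (a :: u) ↔ (x :: t) <+ u := by
  rw [List.sublist_cons_iff]
  constructor
  · rintro (h' | ⟨r, hr, _⟩)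
    · exact h'
    · cases hr; exact absurd rfl h
  · exact Or.inl

theorem bool_ne_iff {a e : Bool} : (¬ a = e) ↔ a = !e := by cases a <;> cases e <;> simp

theorem Emb.dropHead' : ∀ {l v : List Bool}, Emb l v → ∀ {a w}, v = a :: w → Emb l w := by
  intro l v h
  induction h with
  | nil => intro a w hw; cases hw
  | single h ih => intro a w hw; cases hw; exact h
  | head h ih => intro a w hw; cases hw; exact h
  | point h ih => intro a w hw; cases hw; exact .skip h
  | skip h ih => intro a w hw; exact .skip (ih hw)

theorem Emb.inv : ∀ {l v : List Bool}, Emb l v → ∀ {a : Bool} {w : List Bool}, v = a :: w →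
    (∃ e, l = [e] ∧ a = e ∧ Emb l w) ∨
    (∃ e o r, l = e :: o :: r ∧ a = e ∧ Emb l w) ∨
    (∃ e o r, l = e :: o :: r ∧ a = o ∧ Emb r w) ∨
    (∃ e o r, l = e :: o :: r ∧ Emb r (a :: w)) := by
  intro l v h
  cases h with
  | nil => intro a w hw; cases hw
  | single h => intro a w hw; cases hw; exact Or.inl ⟨_, rfl, rfl, h⟩
  | head h => intro a w hw; cases hw; exact Or.inr (Or.inl ⟨_, _, _, rfl, rfl, h⟩)
  | point h => intro a w hw; cases hw; exact Or.inr (Or.inr (Or.inl ⟨_, _, _, rfl, rfl, h⟩))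
  | skip h =>
    intro a w hw; cases hw; exact Or.inr (Or.inr (Or.inr ⟨_, _, _, rfl, h⟩))

theorem core : ∀ (N : ℕ) (l w : List Bool), l.length + w.length = N → l.length % 2 = 1 →
    (Emb l w ↔ ¬ eta l <+ w) := by
  intro N
  induction N using Nat.strong_induction_on with
  | _ N ih =>
  intro l w hN hodd
  match l, w with
  | [], _ => simp at hodd
  | l, [] =>
    refine ⟨fun _ hs => eta_ne_nil l (List.sublist_nil.mp hs), fun _ => Emb.nil l⟩
  | [e], a :: w' =>
    have heta : eta [e] = [!e] := by rw [eta]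
    rw [heta]
    by_cases hae : a = e
    · subst hae
      have hiff : Emb [a] (a :: w') ↔ Emb [a] w' := by
        constructor
        · intro h; exact h.dropHead' rfl
        · intro h; exact h.single
      rw [hiff, mism (by simp), ← heta]
      exact ih ([a].length + w'.length) (by simp at hN ⊢; omega) [a] w' rfl hodd
    · rw [bool_ne_iff] at hae
      subst hae
      constructor
      · intro h
        rcases h.inv rfl with ⟨e', he, hae', -⟩ | ⟨e', o', r', he, -⟩ | he | he
        · cases he; simp at hae'
        · cases he
        · obtain ⟨e', o', r', he, -⟩ := he; cases he
        · obtain ⟨e', o', r', he, -⟩ := he; cases he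
      · intro h
        exfalso; apply h
        exact List.cons_sublist_cons.mpr (List.nil_sublist w')
  | [e, o], a :: w' => simp at hodd
  | e :: o :: e2 :: r, a :: w' =>
    obtain ⟨t, ht⟩ := eta_head (o :: e2 :: r) e
    by_cases hae : a = e
    · subst hae
      have hiff : Emb (a :: o :: e2 :: r) (a :: w') ↔ Emb (a :: o :: e2 :: r) w' := by
        constructor
        · intro h; exact h.dropHead' rfl
        · intro h; exact h.head
      rw [hiff, ht, mism (by simp), ← ht]
      exact ih ((a :: o :: e2 :: r).length + w'.length) (by simp at hN ⊢; omega) _ _ rfl hodd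
    · rw [bool_ne_iff] at hae
      subst hae
      by_cases hskip : o = e ∧ e2 = e
      · have heta : eta (e :: o :: e2 :: r) = eta (e :: r) := by rw [eta, if_pos hskip]
        have hiff : Emb (e :: o :: e2 :: r) ((!e) :: w') ↔ Emb (e :: r) ((!e) :: w') := by
          constructor
          · intro h
            rcases h.inv rfl with ⟨e', he, -, -⟩ | ⟨e', o', r', he, hae', -⟩ |
              ⟨e', o', r', he, hae', hemb⟩ | ⟨e', o', r', he, hemb⟩
            · cases he
            · cases he; simp at hae'
            · cases he; rw [hskip.1] at hae'; simp at hae'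
            · cases he; rw [hskip.2] at hemb; exact hemb
          · intro h
            exact Emb.skip (by rw [hskip.2]; exact h)
        rw [hiff, heta]
        exact ih ((e :: r).length + ((!e) :: w').length) (by simp at hN ⊢; omega) _ _ rfl
          (by simp at hodd ⊢; omega)
      · have heta : eta (e :: o :: e2 :: r) = (!e) :: eta (e2 :: r) := by
          rw [eta, if_neg hskip]
        rw [heta, List.cons_sublist_cons]
        have hr1 : Emb (e2 :: r) w' ↔ ¬ eta (e2 :: r) <+ w' :=
          ih ((e2 :: r).length + w'.length) (by simp at hN ⊢; omega) _ _ rfl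
            (by simp at hodd ⊢; omega)
        have hr2 : Emb (e2 :: r) ((!e) :: w') ↔ ¬ eta (e2 :: r) <+ ((!e) :: w') :=
          ih ((e2 :: r).length + ((!e) :: w').length) (by simp at hN ⊢; omega) _ _ rfl
            (by simp at hodd ⊢; omega)
        have hiff : Emb (e :: o :: e2 :: r) ((!e) :: w') ↔
            (((!e) = o ∧ Emb (e2 :: r) w') ∨ Emb (e2 :: r) ((!e) :: w')) := by
          constructor
          · intro h
            rcases h.inv rfl with ⟨e', he, -, -⟩ | ⟨e', o', r', he, hae', -⟩ |
              ⟨e', o', r', he, hae', hemb⟩ | ⟨e', o', r', he, hemb⟩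
            · cases he
            · cases he; simp at hae'
            · cases he; exact Or.inl ⟨hae', hemb⟩
            · cases he; exact Or.inr hemb
          · rintro (⟨ho, h⟩ | h)
            · rw [ho]; exact Emb.point h
            · exact Emb.skip h
        rw [hiff]
        by_cases ho : o = !e
        · subst ho
          rw [hr1, hr2]
          constructor
          · rintro (⟨-, h⟩ | h) <;> intro hc
            · exact h hc
            · exact h (hc.trans (List.sublist_cons_self _ _))
          · intro h; exact Or.inl ⟨rfl, h⟩
        · have ho' : o = e := by rw [bool_ne_iff] at ho; cases e <;> simp_all
          have he2 : e2 = !e := by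
            rcases Bool.eq_or_eq_not e2 e with h' | h'
            · exact absurd ⟨ho', h'⟩ hskip
            · exact h'
          obtain ⟨t2, ht2⟩ := eta_head r e2
          have hne : (!e2) ≠ (!e) := by rw [he2]; simp
          constructor
          · rintro (⟨hne', -⟩ | h)
            · rw [ho'] at hne'; simp at hne'
            · rw [hr2] at h
              intro hc
              apply h
              rw [ht2] at hc ⊢
              rw [mism hne]
              exact hc
          · intro h
            refine Or.inr (hr2.mpr ?_)
            rw [ht2] at h ⊢
            rw [mism hne]
            exact h

def Rrel (a b : ℕ) : Prop := a < b ∨ (a = b ∧ a % 2 = 0)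

def Cond (l : List Bool) (a : Bool) (k : ℕ) : Prop := k < l.length ∧ l.getD k false = a

theorem Rrel_zero (k : ℕ) : Rrel 0 k := by
  rcases Nat.eq_zero_or_pos k with h | h
  · exact Or.inr ⟨h.symm, rfl⟩
  · exact Or.inl h

theorem Rrel_shift {a b : ℕ} (h : Rrel a b) : Rrel (a + 2) (b + 2) := by
  rcases h with h | ⟨h1, h2⟩
  · exact Or.inl (by omega)
  · exact Or.inr ⟨by omega, by omega⟩

theorem Rrel_unshift {a b : ℕ} (ha : 2 ≤ a) (hb : 2 ≤ b) (h : Rrel a b) :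
    Rrel (a - 2) (b - 2) := by
  rcases h with h | ⟨h1, h2⟩
  · exact Or.inl (by omega)
  · exact Or.inr ⟨by omega, by omega⟩

theorem cond_shift {e o : Bool} {r : List Bool} {a : Bool} {k : ℕ} (hk : 2 ≤ k) :
    Cond (e :: o :: r) a k ↔ Cond r a (k - 2) := by
  obtain ⟨k', rfl⟩ : ∃ k', k = k' + 2 := ⟨k - 2, by omega⟩
  unfold Cond
  have h1 : (e :: o :: r).getD (k' + 2) false = r.getD k' false := by
    show (e :: o :: r).getD (k' + 1 + 1) false = _
    rw [List.getD_cons_succ, List.getD_cons_succ]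
  rw [h1]
  simp only [List.length_cons, Nat.add_sub_cancel]
  constructor
  · rintro ⟨h, h2⟩; exact ⟨by omega, h2⟩
  · rintro ⟨h, h2⟩; exact ⟨by omega, h2⟩

theorem EC1 : ∀ {l w : List Bool}, Emb l w →
    ∃ Q : List ℕ, Q.Pairwise Rrel ∧ List.Forall₂ (Cond l) w Q := by
  intro l w h
  induction h with
  | nil => exact ⟨[], .nil, .nil⟩
  | @single e w _ ih =>
    obtain ⟨Q, hp, hf⟩ := ih
    refine ⟨0 :: Q, ?_, ?_⟩
    · exact List.Pairwise.cons (fun k _ => Rrel_zero k) hp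
    · exact List.Forall₂.cons ⟨by simp, rfl⟩ hf
  | @head e o r w _ ih =>
    obtain ⟨Q, hp, hf⟩ := ih
    refine ⟨0 :: Q, ?_, ?_⟩
    · exact List.Pairwise.cons (fun k _ => Rrel_zero k) hp
    · exact List.Forall₂.cons ⟨by simp, rfl⟩ hf
  | @point e o r w _ ih =>
    obtain ⟨Q, hp, hf⟩ := ih
    refine ⟨1 :: Q.map (· + 2), ?_, ?_⟩
    · refine List.Pairwise.cons ?_ ((List.pairwise_map).mpr (hp.imp Rrel_shift))
      intro k hk
      simp only [List.mem_map] at hk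
      obtain ⟨k', -, rfl⟩ := hk
      exact Or.inl (by omega)
    · refine List.Forall₂.cons ⟨by simp, rfl⟩ ?_
      rw [List.forall₂_map_right_iff]
      refine hf.imp ?_
      intro a k hk
      exact (cond_shift (by omega)).mpr (by simpa using hk)
  | @skip e o r w _ ih =>
    obtain ⟨Q, hp, hf⟩ := ih
    refine ⟨Q.map (· + 2), (List.pairwise_map).mpr (hp.imp Rrel_shift), ?_⟩
    rw [List.forall₂_map_right_iff]
    refine hf.imp ?_
    intro a k hk
    exact (cond_shift (by omega)).mpr (by simpa using hk)

theorem forall₂_imp_mem {α β : Type*} {P P' : α → β → Prop} :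
    ∀ {w : List α} {Q : List β}, List.Forall₂ P w Q →
      (∀ a k, a ∈ w → k ∈ Q → P a k → P' a k) → List.Forall₂ P' w Q := by
  intro w Q h
  induction h with
  | nil => intro _; exact .nil
  | cons h1 h2 ih =>
    intro himp
    exact .cons (himp _ _ (by simp) (by simp) h1)
      (ih fun a k ha hk hp => himp a k (by simp [ha]) (by simp [hk]) hp)

theorem EC2 : ∀ (N : ℕ) (l w : List Bool) (Q : List ℕ), l.length + w.length = N →
    Q.Pairwise Rrel → List.Forall₂ (Cond l) w Q → Emb l w := by
  intro N
  induction N using Nat.strong_induction_on with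
  | _ N ih =>
  intro l w Q hN hp hf
  match w, Q, hf with
  | [], _, _ => exact Emb.nil l
  | a :: w', k :: Q', List.Forall₂.cons hk hf' =>
    have hpair := List.pairwise_cons.mp hp
    match l, hk with
    | [], hk => simp [Cond] at hk
    | [e], hk =>
      have hk0 : k = 0 := by have := hk.1; simp at this; omega
      subst hk0
      have hae : a = e := by have := hk.2; simpa using this.symm
      subst hae
      refine Emb.single (ih (1 + w'.length) (by simp at hN ⊢; omega) [a] w' Q' rfl hpair.2 hf')
    | e :: o :: r, hk =>
      rcases Nat.lt_or_ge k 2 with hk2 | hk2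
      · rcases Nat.lt_or_ge k 1 with hk1 | hk1
        · -- k = 0
          have hk0 : k = 0 := by omega
          subst hk0
          have hae : a = e := by have := hk.2; simpa using this.symm
          subst hae
          exact Emb.head (ih ((a :: o :: r).length + w'.length) (by simp at hN ⊢; omega)
            _ w' Q' rfl hpair.2 hf')
        · -- k = 1
          have hk1' : k = 1 := by omega
          subst hk1'
          have hao : a = o := by have := hk.2; simpa using this.symm
          subst hao
          refine Emb.point (ih (r.length + w'.length) (by simp at hN ⊢; omega)
            r w' (Q'.map (· - 2)) rfl ?_ ?_)
          · refine (List.pairwise_map).mpr (List.Pairwise.imp_of_mem ?_ hpair.2)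
            intro x y hx hy hxy
            have hx2 : 2 ≤ x := by
              rcases hpair.1 x hx with h | ⟨h1, h2⟩ <;> omega
            have hy2 : 2 ≤ y := by
              rcases hpair.1 y hy with h | ⟨h1, h2⟩ <;> omega
            exact Rrel_unshift hx2 hy2 hxy
          · rw [List.forall₂_map_right_iff]
            refine forall₂_imp_mem hf' ?_
            intro a' k' _ hk' hc
            refine (cond_shift ?_).mp hc
            rcases hpair.1 k' hk' with h | ⟨h1, h2⟩ <;> omega
      · -- k ≥ 2
        refine Emb.skip (ih (r.length + (a :: w').length) (by simp at hN ⊢; omega)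
          r (a :: w') ((k :: Q').map (· - 2)) rfl ?_ ?_)
        · refine (List.pairwise_map).mpr (List.Pairwise.imp_of_mem ?_ hp)
          intro x y hx hy hxy
          have hx2 : 2 ≤ x := by
            rcases List.mem_cons.mp hx with rfl | hx'
            · exact hk2
            · rcases hpair.1 x hx' with h | ⟨h1, h2⟩ <;> omega
          have hy2 : 2 ≤ y := by
            rcases List.mem_cons.mp hy with rfl | hy'
            · exact hk2
            · rcases hpair.1 y hy' with h | ⟨h1, h2⟩ <;> omega
          exact Rrel_unshift hx2 hy2 hxy
        · rw [List.forall₂_map_right_iff]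
          refine forall₂_imp_mem (List.Forall₂.cons hk hf') ?_
          intro a' k' _ hk' hc
          refine (cond_shift ?_).mp hc
          rcases List.mem_cons.mp hk' with rfl | hk''
          · exact hk2
          · rcases hpair.1 k' hk'' with h | ⟨h1, h2⟩ <;> omega

theorem construct (n : ℕ) (L : List ℚ) (hL : L.Pairwise (· < ·)) (q : Fin L.length → ℕ)
    (hmono : ∀ i j : Fin L.length, i ≤ j → q i ≤ q j)
    (hinj : ∀ i j, q i = q j → q i % 2 = 1 → i = j)
    (hbd : ∀ i, q i ≤ 2 * n) :
    ∃ p : Fin n → ℚ, StrictMono p ∧ ∀ i : Fin L.length, posN (L.get i) p = q i := by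
  classical
  have hget : StrictMono L.get := hL.sortedLT.strictMono_get
  set D : Finset ℚ := insert 1 (((Finset.univ : Finset (Fin L.length × Fin L.length)).image
    (fun ij => L.get ij.2 - L.get ij.1)).filter (fun d => 0 < d)) with hD
  have hDne : D.Nonempty := ⟨1, Finset.mem_insert_self _ _⟩
  set γ : ℚ := D.min' hDne with hγ
  have hγpos : 0 < γ := by
    have hmem := D.min'_mem hDne
    rcases Finset.mem_insert.mp hmem with h | h
    · rw [hγ, h]; norm_num
    · exact (Finset.mem_filter.mp h).2
  have hγ1 : γ ≤ 1 := D.min'_le 1 (Finset.mem_insert_self _ _)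
  have GAP : ∀ i j : Fin L.length, L.get i < L.get j → L.get i + γ ≤ L.get j := by
    intro i j hij
    have hmem : L.get j - L.get i ∈ D := by
      rw [hD]
      refine Finset.mem_insert_of_mem (Finset.mem_filter.mpr ⟨?_, by linarith⟩)
      exact Finset.mem_image.mpr ⟨(i, j), Finset.mem_univ _, rfl⟩
    have := D.min'_le _ hmem
    rw [← hγ] at this
    linarith
  set E : Finset ℚ := insert 0 ((Finset.univ : Finset (Fin L.length)).image (fun i => L.get i))
    with hE
  have hEne : E.Nonempty := ⟨0, Finset.mem_insert_self _ _⟩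
  set d0 : ℚ := E.min' hEne - 1 with hd0
  have hd0lt : ∀ i : Fin L.length, d0 + 1 ≤ L.get i := by
    intro i
    have : E.min' hEne ≤ L.get i := by
      refine E.min'_le _ ?_
      rw [hE]
      exact Finset.mem_insert_of_mem (Finset.mem_image.mpr ⟨i, Finset.mem_univ _, rfl⟩)
    linarith
  set S : ℕ → Finset (Fin L.length) := fun j => Finset.univ.filter (fun i => q i ≤ 2 * j) with hS
  set f : ℕ → ℚ := fun j =>
    if h : (S j).Nonempty then ((S j).image (fun i => L.get i)).max' (h.image _) else d0 with hf
  have hfpos : ∀ (j : ℕ) (h : (S j).Nonempty),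
      f j = ((S j).image (fun i => L.get i)).max' (h.image _) := fun j h => dif_pos h
  have hfneg : ∀ (j : ℕ), ¬ (S j).Nonempty → f j = d0 := fun j h => dif_neg h
  have F1 : ∀ (j : ℕ) (i : Fin L.length), q i ≤ 2 * j → L.get i ≤ f j := by
    intro j i hij
    have hiS : i ∈ S j := by rw [hS]; simp [hij]
    have hne : (S j).Nonempty := ⟨i, hiS⟩
    rw [hfpos j hne]
    exact Finset.le_max' _ _ (Finset.mem_image.mpr ⟨i, hiS, rfl⟩)
  have F0 : ∀ j : ℕ, f j = d0 ∨ ∃ i0 : Fin L.length, q i0 ≤ 2 * j ∧ f j = L.get i0 := by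
    intro j
    by_cases hne : (S j).Nonempty
    · obtain ⟨i0, hi0, hi0'⟩ := Finset.mem_image.mp (((S j).image (fun i => L.get i)).max'_mem
        (hne.image _))
      right
      refine ⟨i0, ?_, by rw [hfpos j hne, ← hi0']⟩
      rw [hS] at hi0
      simpa using (Finset.mem_filter.mp hi0).2
    · exact Or.inl (hfneg j hne)
  have F2 : ∀ (j : ℕ) (k : Fin L.length), 2 * j + 2 ≤ q k → f j + γ ≤ L.get k := by
    intro j k hk
    rcases F0 j with h | ⟨i0, hi0, h⟩
    · rw [h]
      have := hd0lt k
      linarith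
    · rw [h]
      have hik : i0 < k := by
        by_contra hc
        push_neg at hc
        have := hmono k i0 hc
        omega
      exact GAP i0 k (hget hik)
  have F3 : ∀ j j' : ℕ, j ≤ j' → f j ≤ f j' := by
    intro j j' hjj
    rcases F0 j with h | ⟨i0, hi0, h⟩
    · rw [h]
      rcases F0 j' with h' | ⟨i1, hi1, h'⟩
      · rw [h']
      · rw [h']
        have := hd0lt i1
        linarith
    · rw [h]
      exact F1 j' i0 (by omega)
  set ε : ℚ := γ / (2 * n + 2) with hε
  have hεpos : 0 < ε := by
    rw [hε]
    apply div_pos hγpos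
    positivity
  have hεlt : ∀ j : ℕ, j < n → ((j : ℚ) + 1) * ε < γ := by
    intro j hj
    rw [hε, div_eq_mul_inv, ← mul_assoc, ← div_eq_mul_inv, div_lt_iff₀ (by positivity)]
    have : (j : ℚ) + 1 < 2 * n + 2 := by
      have : (j : ℚ) < n := by exact_mod_cast hj
      linarith
    nlinarith
  set p : Fin n → ℚ := fun j =>
    if h : ∃ i : Fin L.length, q i = 2 * (j : ℕ) + 1 then L.get h.choose
    else f j + ((j : ℕ) + 1) * ε with hp
  have hanchor : ∀ (j : Fin n) (h : ∃ i : Fin L.length, q i = 2 * (j : ℕ) + 1),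
      p j = L.get h.choose ∧ q h.choose = 2 * (j : ℕ) + 1 :=
    fun j h => ⟨dif_pos h, h.choose_spec⟩
  have hfree : ∀ (j : Fin n), ¬ (∃ i : Fin L.length, q i = 2 * (j : ℕ) + 1) →
      p j = f j + ((j : ℕ) + 1) * ε := fun j h => dif_neg h
  have hpos : ∀ j : Fin n, 0 < ((j : ℕ) + 1 : ℚ) * ε := by
    intro j
    have : (0 : ℚ) < (j : ℕ) + 1 := by positivity
    exact mul_pos this hεpos
  have hSM : StrictMono p := by
    intro j j' hjj
    have hjj' := Fin.lt_def.mp hjj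
    by_cases h1 : ∃ i : Fin L.length, q i = 2 * (j : ℕ) + 1 <;>
      by_cases h2 : ∃ i : Fin L.length, q i = 2 * (j' : ℕ) + 1
    · obtain ⟨e1, he1⟩ := hanchor j h1
      obtain ⟨e2, he2⟩ := hanchor j' h2
      rw [e1, e2]
      apply hget
      rw [Fin.lt_def]
      by_contra hc
      push_neg at hc
      have := hmono _ _ (Fin.le_def.mpr hc)
      rw [he1, he2] at this
      omega
    · obtain ⟨e1, he1⟩ := hanchor j h1
      rw [e1, hfree j' h2]
      have : L.get h1.choose ≤ f j' := F1 j' h1.choose (by rw [he1]; omega)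
      have := hpos j'
      linarith
    · obtain ⟨e2, he2⟩ := hanchor j' h2
      rw [hfree j h1, e2]
      have hF2 : f j + γ ≤ L.get h2.choose := F2 j h2.choose (by rw [he2]; omega)
      have := hεlt (j : ℕ) j.isLt
      linarith
    · rw [hfree j h1, hfree j' h2]
      have hF3 := F3 j j' (by omega)
      have : ((j : ℕ) + 1 : ℚ) * ε < ((j' : ℕ) + 1 : ℚ) * ε := by
        have hc : ((j : ℕ) + 1 : ℚ) < ((j' : ℕ) + 1 : ℚ) := by exact_mod_cast by omega
        exact mul_lt_mul_of_pos_right hc hεpos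
      linarith
  refine ⟨p, hSM, ?_⟩
  intro i
  have ClaimA : ∀ j : Fin n, p j < L.get i ↔ 2 * (j : ℕ) + 2 ≤ q i := by
    intro j
    constructor
    · intro hlt
      by_contra hc
      push_neg at hc
      have hxle : L.get i ≤ p j := by
        by_cases h1 : ∃ i' : Fin L.length, q i' = 2 * (j : ℕ) + 1
        · obtain ⟨e1, he1⟩ := hanchor j h1
          have hile : i ≤ h1.choose := by
            by_contra hc2
            push_neg at hc2
            have hle := hmono _ _ hc2.le
            rw [he1] at hle
            have hkeq : q i = 2 * (j : ℕ) + 1 := by omega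
            have := hinj h1.choose i (by rw [he1, hkeq]) (by rw [he1]; omega)
            rw [this] at hc2
            exact absurd hc2 (lt_irrefl _)
          rw [e1]
          rcases lt_or_eq_of_le hile with h | h
          · exact le_of_lt (hget h)
          · rw [h]
        · have hk2j : q i ≤ 2 * (j : ℕ) := by
            rcases Nat.lt_or_ge (q i) (2 * (j : ℕ) + 1) with h | h
            · omega
            · have heq : q i = 2 * (j : ℕ) + 1 := by omega
              exact absurd ⟨i, heq⟩ h1
          rw [hfree j h1]
          have := F1 j i (by omega)
          have := hpos j
          linarith
      linarith
    · intro h2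
      by_cases h1 : ∃ i' : Fin L.length, q i' = 2 * (j : ℕ) + 1
      · obtain ⟨e1, he1⟩ := hanchor j h1
        rw [e1]
        apply hget
        rw [Fin.lt_def]
        by_contra hc
        push_neg at hc
        have := hmono _ _ (Fin.le_def.mpr hc)
        rw [he1] at this
        omega
      · rw [hfree j h1]
        have hF2 := F2 j i (by omega)
        have := hεlt (j : ℕ) j.isLt
        linarith
  have ClaimB : (∃ j : Fin n, p j = L.get i) ↔ q i % 2 = 1 := by
    constructor
    · rintro ⟨j, hj⟩
      by_cases h1 : ∃ i' : Fin L.length, q i' = 2 * (j : ℕ) + 1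
      · obtain ⟨e1, he1⟩ := hanchor j h1
        rw [e1] at hj
        have hii : h1.choose = i := hget.injective hj
        rw [hii] at he1
        omega
      · exfalso
        rcases Nat.lt_or_ge (q i) (2 * (j : ℕ) + 2) with h | h
        · have hk2j : q i ≤ 2 * (j : ℕ) := by
            rcases Nat.lt_or_ge (q i) (2 * (j : ℕ) + 1) with h' | h'
            · omega
            · have heq : q i = 2 * (j : ℕ) + 1 := by omega
              exact absurd ⟨i, heq⟩ h1
          rw [hfree j h1] at hj
          have := F1 j i (by omega)
          have := hpos j
          linarith
        · have := (ClaimA j).mpr h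
          rw [hj] at this
          exact absurd this (lt_irrefl _)
    · intro hodd
      have hkn : q i / 2 < n := by
        have := hbd i
        omega
      have h1 : ∃ i' : Fin L.length, q i' = 2 * ((⟨q i / 2, hkn⟩ : Fin n) : ℕ) + 1 :=
        ⟨i, by simp; omega⟩
      obtain ⟨e1, he1⟩ := hanchor _ h1
      have hii : h1.choose = i := by
        refine hinj h1.choose i ?_ ?_
        · rw [he1]; simp; omega
        · rw [he1]; omega
      exact ⟨⟨q i / 2, hkn⟩, by rw [e1, hii]⟩
  have hcard : (Finset.univ.filter (fun j : Fin n => p j < L.get i)).card = q i / 2 := by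
    have heq : Finset.univ.filter (fun j : Fin n => p j < L.get i) =
        Finset.univ.filter (fun j : Fin n => (j : ℕ) < q i / 2) := by
      ext j
      simp only [Finset.mem_filter, Finset.mem_univ, true_and]
      rw [ClaimA j]
      omega
    rw [heq]
    exact card_filter_lt_fin _ (by have := hbd i; omega)
  unfold posN
  rw [hcard]
  by_cases hpar : q i % 2 = 1
  · rw [if_pos (ClaimB.mpr hpar)]
    omega
  · rw [if_neg (fun hc => hpar (ClaimB.mp hc))]
    omega

theorem posN_rrel {n : ℕ} {p : Fin n → ℚ} (hp : StrictMono p) {x y : ℚ} (hxy : x < y) :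
    Rrel (posN x p) (posN y p) := by
  have hle := posN_mono hp hxy.le
  rcases lt_or_eq_of_le hle with h | h
  · exact Or.inl h
  · refine Or.inr ⟨h, ?_⟩
    by_contra hodd
    have hodd' : posN x p % 2 = 1 := by omega
    exact absurd (posN_odd_inj hp hodd' h) (ne_of_lt hxy)

theorem bridge1 (n : ℕ) (φ : QF n) (L : List ℚ) (hLsort : L.Pairwise (· < ·)) (c : Set ℚ)
    [DecidablePred (· ∈ c)] :
    (∃ p : Fin n → ℚ, StrictMono p ∧ ∀ x ∈ L, (x ∈ c ↔ sVal φ (posN x p) = true)) ↔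
      Emb (List.ofFn (fun k : Fin (2 * n + 1) => sVal φ (k : ℕ)))
        (L.map (fun x => decide (x ∈ c))) := by
  classical
  set l : List Bool := List.ofFn (fun k : Fin (2 * n + 1) => sVal φ (k : ℕ)) with hl
  have hllen : l.length = 2 * n + 1 := by rw [hl, List.length_ofFn]
  have hgetl : ∀ (k : ℕ) (hk : k < 2 * n + 1), l.getD k false = sVal φ k := by
    intro k hk
    rw [List.getD_eq_getElem l false (show k < l.length by omega)]
    simp only [hl, List.getElem_ofFn]
  constructor
  · rintro ⟨p, hp, hcond⟩
    refine EC2 (l.length + (L.map (fun x => decide (x ∈ c))).length) l _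
      (L.map (fun x => posN x p)) rfl ?_ ?_
    · rw [List.pairwise_map]
      exact hLsort.imp (fun h => posN_rrel hp h)
    · rw [List.forall₂_map_right_iff, List.forall₂_map_left_iff, List.forall₂_same]
      intro x hx
      have hb := posN_le (a := x) hp
      refine ⟨by omega, ?_⟩
      rw [hgetl _ (by omega)]
      have := hcond x hx
      by_cases hxc : x ∈ c
      · simp [hxc, (this.mp hxc)]
      · have : ¬ sVal φ (posN x p) = true := fun hc => hxc (this.mpr hc)
        simp [hxc, this]
  · intro hemb
    obtain ⟨Q, hQp, hQf⟩ := EC1 hemb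
    have hQlen : L.length = Q.length := by
      have := hQf.length_eq
      rwa [List.length_map] at this
    have hcond := List.forall₂_iff_get.mp hQf
    have hpair := List.pairwise_iff_getElem.mp hQp
    set q : Fin L.length → ℕ := fun i => Q[(i : ℕ)]'(by omega) with hq
    have hRij : ∀ i j : Fin L.length, (i : ℕ) < (j : ℕ) → Rrel (q i) (q j) := by
      intro i j h
      exact hpair (i : ℕ) (j : ℕ) (by omega) (by omega) h
    have hcondi : ∀ i : Fin L.length,
        Cond l (decide (L.get i ∈ c)) (q i) := by
      intro i
      have h2 := hcond.2 i (by rw [List.length_map]; exact i.isLt) (by omega)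
      simpa [List.get_eq_getElem] using h2
    have hmono : ∀ i j : Fin L.length, i ≤ j → q i ≤ q j := by
      intro i j hij
      rcases lt_or_eq_of_le hij with h | h
      · rcases hRij i j (by exact_mod_cast h) with h' | ⟨h', -⟩
        · exact le_of_lt h'
        · exact le_of_eq h'
      · rw [h]
    have hinj : ∀ i j : Fin L.length, q i = q j → q i % 2 = 1 → i = j := by
      intro i j heq hodd
      rcases lt_trichotomy i j with h | h | h
      · exfalso
        rcases hRij i j (by exact_mod_cast h) with h' | ⟨-, h'⟩ <;> omega
      · exact h
      · exfalso
        rcases hRij j i (by exact_mod_cast h) with h' | ⟨h', h''⟩ <;> omega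
    have hbd : ∀ i : Fin L.length, q i ≤ 2 * n := by
      intro i
      have := (hcondi i).1
      omega
    obtain ⟨p, hp, hpos⟩ := construct n L hLsort q hmono hinj hbd
    refine ⟨p, hp, ?_⟩
    intro x hx
    obtain ⟨i, hi⟩ := List.mem_iff_get.mp hx
    subst hi
    rw [hpos i]
    have := (hcondi i).2
    rw [hgetl _ (by have := (hcondi i).1; omega)] at this
    rw [this, decide_eq_true_eq]

theorem bridge2 (d : ℕ) (ηl : List Bool) (hηlen : ηl.length = d + 1)
    (η : Fin (d + 1) → Bool) (hη : ∀ i : Fin (d + 1), η i = ηl.getD (i : ℕ) false)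
    (L : List ℚ) (hLsort : L.Pairwise (· < ·)) (B : Set ℚ) (hLmem : ∀ x, x ∈ L ↔ x ∈ B)
    (c : Set ℚ) [DecidablePred (· ∈ c)] :
    Induces c η B ↔ ηl <+ L.map (fun x => decide (x ∈ c)) := by
  have hget := hLsort.sortedLT.strictMono_get
  have hηget : ∀ i : Fin ηl.length, ηl.get i = η ⟨(i : ℕ), by omega⟩ := by
    intro i
    rw [hη ⟨(i : ℕ), by omega⟩]
    exact (List.getD_eq_get ηl false i).symm
  constructor
  · rintro ⟨b, hb, hbB, hbc⟩
    rw [List.sublist_iff_exists_fin_orderEmbedding_get_eq]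
    have hmem : ∀ i : Fin (d + 1), b i ∈ L := fun i => (hLmem _).mpr (hbB i)
    set g : Fin (d + 1) → Fin L.length := fun i =>
      ⟨List.idxOf (b i) L, List.idxOf_lt_length_iff.mpr (hmem i)⟩ with hg
    have hgval : ∀ i, L.get (g i) = b i := fun i => List.getElem_idxOf _
    have hgmono : StrictMono g := by
      intro i j hij
      have : L.get (g i) < L.get (g j) := by rw [hgval, hgval]; exact hb hij
      exact hget.lt_iff_lt.mp this
    have hFmono : StrictMono (fun i : Fin ηl.length =>
        (⟨(g ⟨(i : ℕ), by omega⟩ : ℕ), by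
          rw [List.length_map]; exact (g _).isLt⟩ : Fin (L.map (fun x => decide (x ∈ c))).length)) := by
      intro i j hij
      have h1 : (⟨(i : ℕ), by omega⟩ : Fin (d + 1)) < ⟨(j : ℕ), by omega⟩ := by
        rw [Fin.lt_def]; exact hij
      have := hgmono h1
      rw [Fin.lt_def] at this ⊢
      exact this
    refine ⟨OrderEmbedding.ofStrictMono _ hFmono, ?_⟩
    intro ix
    have hlt : (ix : ℕ) < d + 1 := by omega
    rw [hηget ix]
    show η ⟨(ix : ℕ), hlt⟩ = (L.map (fun x => decide (x ∈ c))).get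
      ⟨(g ⟨(ix : ℕ), hlt⟩ : ℕ), by rw [List.length_map]; exact (g _).isLt⟩
    have h3 : L.get (g ⟨(ix : ℕ), hlt⟩) = b ⟨(ix : ℕ), hlt⟩ := hgval _
    rw [List.get_eq_getElem, List.getElem_map]
    rw [List.get_eq_getElem] at h3
    rw [h3]
    rcases Bool.eq_false_or_eq_true (η ⟨(ix : ℕ), hlt⟩) with h | h
    · rw [h]
      simp [(hbc _).mpr h]
    · rw [h]
      have hc : ¬ b ⟨(ix : ℕ), hlt⟩ ∈ c := fun hmemc =>
        absurd ((hbc _).mp hmemc) (by rw [h]; simp)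
      simp [hc]
  · intro hsub
    obtain ⟨f, hf⟩ := List.sublist_iff_exists_fin_orderEmbedding_get_eq.mp hsub
    set b : Fin (d + 1) → ℚ := fun i =>
      L.get (Fin.cast (List.length_map _) (f (Fin.cast hηlen.symm i))) with hb
    refine ⟨b, ?_, ?_, ?_⟩
    · intro i j hij
      apply hget
      rw [Fin.lt_def]
      have h1 : f (Fin.cast hηlen.symm i) < f (Fin.cast hηlen.symm j) := by
        apply f.strictMono
        rw [Fin.lt_def]
        exact hij
      rw [Fin.lt_def] at h1
      exact h1
    · intro i
      exact (hLmem _).mp (List.get_mem _ _)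
    · intro i
      have := hf (Fin.cast hηlen.symm i)
      rw [hηget] at this
      have hcast : (⟨((Fin.cast hηlen.symm i : Fin ηl.length) : ℕ), by omega⟩ : Fin (d + 1)) = i := by
        ext; simp
      rw [hcast] at this
      rw [List.get_eq_getElem, List.getElem_map] at this
      have hbi : L[((f (Fin.cast hηlen.symm i)) : ℕ)] = b i := rfl
      rw [hbi] at this
      rw [this]
      simp

/-- Every quantifier-free order formula has its increasing-parameter definable
family finitely characterized by some forbidden label. -/
theorem formula_finChar (n : ℕ) (φ : QF n) :
    ∃ (d : ℕ) (η : Fin (d + 1) → Bool), ∀ B : Set ℚ, B.Finite →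
      traceOn (defFam φ) B = {c : Set ℚ | c ⊆ B ∧ ¬ Induces c η B} := by
  classical
  set l : List Bool := List.ofFn (fun k : Fin (2 * n + 1) => sVal φ (k : ℕ)) with hl
  have hlodd : l.length % 2 = 1 := by rw [hl, List.length_ofFn]; omega
  have hηne := eta_ne_nil l
  set ηl := eta l with hηl
  have hηlen : ηl.length = (ηl.length - 1) + 1 := by
    cases hh : ηl with
    | nil => exact absurd hh hηne
    | cons a t => simp
  refine ⟨ηl.length - 1, fun i => ηl.getD (i : ℕ) false, ?_⟩
  intro B hB
  set L := hB.toFinset.sort (· ≤ ·) with hL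
  have hLsort : L.Pairwise (· < ·) := hB.toFinset.sortedLT_sort.pairwise
  have hLmem : ∀ x, x ∈ L ↔ x ∈ B := by
    intro x
    rw [hL, Finset.mem_sort]
    exact hB.mem_toFinset
  ext c
  simp only [traceOn, defFam, Set.mem_setOf_eq]
  constructor
  · rintro ⟨c₀, ⟨p, hp, rfl⟩, rfl⟩
    refine ⟨Set.inter_subset_right, ?_⟩
    intro hind
    have hsub := (bridge2 (ηl.length - 1) ηl hηlen _ (fun i => rfl) L hLsort B hLmem _).mp hind
    have hcond : ∀ x ∈ L, (x ∈ {a : ℚ | φ.Sat a p} ∩ B ↔ sVal φ (posN x p) = true) := by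
      intro x hx
      have hxB : x ∈ B := (hLmem x).mp hx
      constructor
      · rintro ⟨hsat, -⟩
        exact (sat_iff_sVal hp x φ).mp hsat
      · intro hs
        exact ⟨(sat_iff_sVal hp x φ).mpr hs, hxB⟩
    have hemb := (bridge1 n φ L hLsort _).mp ⟨p, hp, hcond⟩
    exact (core (l.length + (L.map (fun x => decide (x ∈ {a : ℚ | φ.Sat a p} ∩ B))).length)
      l _ rfl hlodd).mp hemb hsub
  · rintro ⟨hcB, hnind⟩
    have hnsub : ¬ ηl <+ L.map (fun x => decide (x ∈ c)) := by
      intro hsub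
      exact hnind ((bridge2 (ηl.length - 1) ηl hηlen _ (fun i => rfl) L hLsort B hLmem _).mpr hsub)
    have hemb := (core (l.length + (L.map (fun x => decide (x ∈ c))).length)
      l _ rfl hlodd).mpr hnsub
    obtain ⟨p, hp, hcond⟩ := (bridge1 n φ L hLsort _).mpr hemb
    refine ⟨{a | φ.Sat a p}, ⟨p, hp, rfl⟩, ?_⟩
    ext x
    constructor
    · intro hx
      refine ⟨(sat_iff_sVal hp x φ).mpr ((hcond x ((hLmem x).mpr (hcB hx))).mp hx), hcB hx⟩
    · rintro ⟨hsat, hxB⟩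
      exact (hcond x ((hLmem x).mpr hxB)).mpr ((sat_iff_sVal hp x φ).mp hsat)
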